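/- arXiv:2512.12862 — 10 statements merged into one kernel-verified Lean document; each statement's English description precedes it below -/
import Mathlib

section
/- Let X be a nonempty compact metric space with metric d and let T : X → X be an arbitrary function (no continuity or measurability is assumed). Then (i) there exists a strongly chain-recurrent point, i.e., some x ∈ X with x SC_d x, and (ii) there exists a nonempty, topologically closed subset S ⊆ X with T(S) ⊆ S that is internally SC_d-transitive. (This is the topological content of the paper's Theorem on the induced collapse dynamics T_{U,D} on projective state space ℙ(ℋ), which is a nonempty compact metric space under the Fubini–Study metric, since no regularity of T_{U,D} is assumed.) -/
/-- `c 0, c 1, …, c n` is a strong `(ε,d)`-chain for `f` from `x` to `y`: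
`n ≥ 1`, `c 0 = x`, `c n = y` and `∑_{i<n} d(f(c i), c (i+1)) < ε`. -/
def IsStrongChain {X : Type*} [MetricSpace X] (f : X → X) (ε : ℝ) (x y : X)
    (n : ℕ) (c : ℕ → X) : Prop :=
  1 ≤ n ∧ c 0 = x ∧ c n = y ∧
    ∑ i ∈ Finset.range n, dist (f (c i)) (c (i + 1)) < ε

/-- The strong chain relation `SC_d`. -/
def StrongChainRel {X : Type*} [MetricSpace X] (f : X → X) (x y : X) : Prop :=
  ∀ ε : ℝ, 0 < ε → ∃ (n : ℕ) (c : ℕ → X), IsStrongChain f ε x y n c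

/-- The trivial one-step chain from `a` to `T a` has cost `0`. -/
lemma chain_step {X : Type*} [MetricSpace X] (T : X → X) (a : X) {ε : ℝ} (hε : 0 < ε) :
    IsStrongChain T ε a (T a) 1 (fun i => if i = 0 then a else T a) := by
  refine ⟨le_refl 1, rfl, rfl, ?_⟩
  simpa using hε

/-- Extend a chain ending at `y` by appending `T y` at cost `0`. -/
lemma chain_extend {X : Type*} [MetricSpace X] {T : X → X} {ε : ℝ} {a y : X} {n : ℕ}
    {c : ℕ → X} (hc : IsStrongChain T ε a y n c) :
    IsStrongChain T ε a (T y) (n + 1) (fun i => if i ≤ n then c i else T y) := by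
  obtain ⟨hn, h0, hny, hsum⟩ := hc
  refine ⟨le_trans hn (Nat.le_succ n), by simpa using h0, by simp, ?_⟩
  rw [Finset.sum_range_succ]
  have h1 : ∀ i ∈ Finset.range n,
      dist (T (if i ≤ n then c i else T y)) (if i + 1 ≤ n then c (i + 1) else T y)
        = dist (T (c i)) (c (i + 1)) := by
    intro i hi
    rw [Finset.mem_range] at hi
    rw [if_pos (le_of_lt hi), if_pos (show i + 1 ≤ n by omega)]
  rw [Finset.sum_congr rfl h1]
  have h2 : dist (T (if n ≤ n then c n else T y)) (if n + 1 ≤ n then c (n + 1) else T y)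
      = 0 := by
    rw [if_pos (le_refl n), if_neg (by omega), hny, dist_self]
  rw [h2, add_zero]
  exact hsum

/-- Replace the last point of a chain by a nearby point. -/
lemma chain_replace_last {X : Type*} [MetricSpace X] {T : X → X} {ε₁ ε : ℝ} {a z y : X}
    {n : ℕ} {c : ℕ → X} (hc : IsStrongChain T ε₁ a z n c) (hd : dist z y < ε - ε₁) :
    IsStrongChain T ε a y n (fun i => if i = n then y else c i) := by
  obtain ⟨hn, h0, hnz, hsum⟩ := hc
  refine ⟨hn, ?_, ?_, ?_⟩
  · show (if 0 = n then y else c 0) = a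
    rw [if_neg (by omega)]; exact h0
  · show (if n = n then y else c n) = y
    rw [if_pos rfl]
  show ∑ i ∈ Finset.range n,
      dist (T (if i = n then y else c i)) (if i + 1 = n then y else c (i + 1)) < ε
  have hbound : ∀ i ∈ Finset.range n,
      dist (T (if i = n then y else c i)) (if i + 1 = n then y else c (i + 1))
        ≤ dist (T (c i)) (c (i + 1)) + (if i + 1 = n then dist z y else 0) := by
    intro i hi
    rw [Finset.mem_range] at hi
    rw [if_neg (by omega)]
    by_cases h : i + 1 = n
    · rw [if_pos h, if_pos h]
      calc dist (T (c i)) y ≤ dist (T (c i)) (c (i + 1)) + dist (c (i + 1)) y :=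
            dist_triangle _ _ _
        _ = dist (T (c i)) (c (i + 1)) + dist z y := by rw [h, hnz]
    · rw [if_neg h, if_neg h, add_zero]
  calc ∑ i ∈ Finset.range n, dist (T (if i = n then y else c i))
          (if i + 1 = n then y else c (i + 1))
      ≤ ∑ i ∈ Finset.range n,
          (dist (T (c i)) (c (i + 1)) + (if i + 1 = n then dist z y else 0)) :=
        Finset.sum_le_sum hbound
    _ = (∑ i ∈ Finset.range n, dist (T (c i)) (c (i + 1)))
          + ∑ i ∈ Finset.range n, (if i + 1 = n then dist z y else 0) := by
        rw [Finset.sum_add_distrib]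
    _ = (∑ i ∈ Finset.range n, dist (T (c i)) (c (i + 1))) + dist z y := by
        congr 1
        have : ∀ i ∈ Finset.range n, (if i + 1 = n then dist z y else 0)
            = (if i = n - 1 then dist z y else 0) := by
          intro i hi
          rw [Finset.mem_range] at hi
          congr 1
          simp only [eq_iff_iff]
          omega
        rw [Finset.sum_congr rfl this, Finset.sum_ite_eq' (Finset.range n) (n - 1)]
        rw [if_pos (Finset.mem_range.mpr (by omega))]
    _ < ε := by linarith

theorem strong_chain_recurrence_and_transitive_subsystem
    {X : Type*} [MetricSpace X] [CompactSpace X] [Nonempty X] (T : X → X) :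
    (∃ x : X, StrongChainRel T x x) ∧
    (∃ S : Set X, S.Nonempty ∧ IsClosed S ∧ Set.MapsTo T S S ∧
      ∀ x ∈ S, ∀ y ∈ S, ∀ ε : ℝ, 0 < ε →
        ∃ (n : ℕ) (c : ℕ → X), IsStrongChain T ε x y n c ∧ ∀ i ≤ n, c i ∈ S) := by
  -- The family of nonempty closed invariant sets
  set 𝒮 : Set (Set X) := {S | S.Nonempty ∧ IsClosed S ∧ Set.MapsTo T S S} with h𝒮
  have hX : (Set.univ : Set X) ∈ 𝒮 :=
    ⟨Set.univ_nonempty, isClosed_univ, fun x _ => Set.mem_univ _⟩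
  -- Zorn's lemma: there is a minimal element of 𝒮
  obtain ⟨S, -, hS𝒮, hSmin⟩ := zorn_superset_nonempty 𝒮 (fun c hc𝒮 hchain hcne => by
    refine ⟨⋂₀ c, ⟨?_, ?_, ?_⟩, fun s hs => Set.sInter_subset_of_mem hs⟩
    · have : Nonempty c := hcne.to_subtype
      exact IsCompact.nonempty_sInter_of_directed_nonempty_isCompact_isClosed
        (fun x hx y hy => (hchain.total hx hy).elim
          (fun h => ⟨x, hx, subset_rfl, h⟩) (fun h => ⟨y, hy, h, subset_rfl⟩))
        (fun U hU => (hc𝒮 hU).1) (fun U hU => (hc𝒮 hU).2.1.isCompact)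
        (fun U hU => (hc𝒮 hU).2.1)
    · exact isClosed_sInter fun U hU => (hc𝒮 hU).2.1
    · intro x hx U hU
      exact (hc𝒮 hU).2.2 (hx U hU)) Set.univ hX
  obtain ⟨hSne, hScl, hSinv⟩ := hS𝒮
  -- key: internal transitivity of S
  have key : ∀ a ∈ S, ∀ y ∈ S, ∀ ε : ℝ, 0 < ε →
      ∃ (n : ℕ) (c : ℕ → X), IsStrongChain T ε a y n c ∧ ∀ i ≤ n, c i ∈ S := by
    intro a ha
    set M : Set X := {y | y ∈ S ∧ ∀ ε : ℝ, 0 < ε →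
      ∃ (n : ℕ) (c : ℕ → X), IsStrongChain T ε a y n c ∧ ∀ i ≤ n, c i ∈ S} with hM
    have hMS : M ⊆ S := fun y hy => hy.1
    have hMne : M.Nonempty := by
      refine ⟨T a, hSinv ha, fun ε hε => ⟨1, _, chain_step T a hε, ?_⟩⟩
      intro i hi
      by_cases h : i = 0
      · simp only [h, if_pos rfl]; exact ha
      · simp only [if_neg h]; exact hSinv ha
    have hMinv : Set.MapsTo T M M := by
      rintro y ⟨hyS, hy⟩
      refine ⟨hSinv hyS, fun ε hε => ?_⟩
      obtain ⟨n, c, hc, hcS⟩ := hy ε hε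
      refine ⟨n + 1, _, chain_extend hc, fun i hi => ?_⟩
      by_cases h : i ≤ n
      · simp only [if_pos h]; exact hcS i h
      · simp only [if_neg h]; exact hSinv hyS
    have hMcl : IsClosed M := by
      refine isClosed_of_closure_subset fun y hy => ?_
      have hyS : y ∈ S := hScl.closure_subset_iff.mpr hMS hy
      refine ⟨hyS, fun ε hε => ?_⟩
      obtain ⟨z, hzM, hzy⟩ := Metric.mem_closure_iff.mp hy (ε / 2) (by linarith)
      obtain ⟨n, c, hc, hcS⟩ := hzM.2 (ε / 2) (by linarith)
      refine ⟨n, _, chain_replace_last hc (by rw [dist_comm]; linarith), fun i hi => ?_⟩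
      by_cases h : i = n
      · simp only [if_pos h]; exact hyS
      · simp only [if_neg h]; exact hcS i hi
    have : M = S := le_antisymm hMS (hSmin ⟨hMne, hMcl, hMinv⟩ hMS)
    intro y hy
    exact (this ▸ hy : y ∈ M).2
  obtain ⟨a, ha⟩ := hSne
  constructor
  · exact ⟨a, fun ε hε => (key a ha a ha ε hε).imp fun n h => h.imp fun c h => h.1⟩
  · exact ⟨S, ⟨a, ha⟩, hScl, hSinv, key⟩
end

section
/- Let X be a nonempty compact metric space with metric d and let f : X → X be an arbitrary function (no continuity is assumed). Then the set of strongly chain-recurrent points of (X,f) is nonempty: there exists x ∈ X such that for every ε > 0 there is a strong (ε,d)-chain from x back to x. -/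
section Aux

variable {X : Type*} [MetricSpace X] (f : X → X)

/-- There is a strong `(ε,d)`-chain from `x` to `y`. -/
def HasChain (ε : ℝ) (x y : X) : Prop := ∃ n c, IsStrongChain f ε x y n c

variable {f}

lemma hasChain_step {ε : ℝ} (hε : 0 < ε) (x : X) : HasChain f ε x (f x) := by
  refine ⟨1, fun i => if i = 0 then x else f x, le_refl 1, by simp, by simp, ?_⟩
  simpa using hε

lemma hasChain_trans {ε₁ ε₂ : ℝ} {x y z : X} (h₁ : HasChain f ε₁ x y)
    (h₂ : HasChain f ε₂ y z) : HasChain f (ε₁ + ε₂) x z := by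
  obtain ⟨n, c, hn, hc0, hcn, hsum⟩ := h₁
  obtain ⟨m, c', hm, hc'0, hc'm, hsum'⟩ := h₂
  refine ⟨n + m, fun i => if i < n then c i else c' (i - n), by omega, ?_, ?_, ?_⟩
  · simp only [if_pos (by omega : 0 < n)]; exact hc0
  · simp only [if_neg (by omega : ¬ n + m < n)]
    simpa using hc'm
  · rw [Finset.sum_range_add]
    have e1 : ∀ i ∈ Finset.range n,
        dist (f (if i < n then c i else c' (i - n)))
          (if i + 1 < n then c (i + 1) else c' (i + 1 - n))
        = dist (f (c i)) (c (i + 1)) := by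
      intro i hi
      rw [Finset.mem_range] at hi
      rw [if_pos hi]
      by_cases h : i + 1 < n
      · rw [if_pos h]
      · have : i + 1 = n := by omega
        rw [if_neg h, this]
        simp [hc'0, hcn]
    have e2 : ∀ j ∈ Finset.range m,
        dist (f (if n + j < n then c (n + j) else c' (n + j - n)))
          (if n + j + 1 < n then c (n + j + 1) else c' (n + j + 1 - n))
        = dist (f (c' j)) (c' (j + 1)) := by
      intro j _
      rw [if_neg (by omega), if_neg (by omega),
        show n + j - n = j by omega, show n + j + 1 - n = j + 1 by omega]
    rw [Finset.sum_congr rfl e1, Finset.sum_congr rfl e2]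
    exact add_lt_add hsum hsum'

lemma hasChain_endpoint {ε δ : ℝ} {x y y' : X} (h : HasChain f ε x y)
    (hd : dist y y' < δ) : HasChain f (ε + δ) x y' := by
  obtain ⟨n, c, hn, hc0, hcn, hsum⟩ := h
  refine ⟨n, fun i => if i = n then y' else c i, hn, ?_, by simp, ?_⟩
  · show (if 0 = n then y' else c 0) = x
    rw [if_neg (by omega)]; exact hc0
  · show (∑ i ∈ Finset.range n,
        dist (f (if i = n then y' else c i)) (if i + 1 = n then y' else c (i + 1))) < ε + δ
    have key : ∀ i ∈ Finset.range n,
        dist (f (if i = n then y' else c i)) (if i + 1 = n then y' else c (i + 1))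
        ≤ dist (f (c i)) (c (i + 1)) + (if i = n - 1 then dist y y' else 0) := by
      intro i hi
      rw [Finset.mem_range] at hi
      rw [if_neg (by omega : ¬ i = n)]
      by_cases h : i + 1 = n
      · rw [if_pos h, if_pos (by omega)]
        calc dist (f (c i)) y' ≤ dist (f (c i)) (c (i + 1)) + dist (c (i + 1)) y' :=
              dist_triangle _ _ _
          _ = dist (f (c i)) (c (i + 1)) + dist y y' := by rw [h, hcn]
      · rw [if_neg h, if_neg (by omega)]
        simp
    calc ∑ i ∈ Finset.range n,
          dist (f (if i = n then y' else c i)) (if i + 1 = n then y' else c (i + 1))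
        ≤ ∑ i ∈ Finset.range n,
            (dist (f (c i)) (c (i + 1)) + (if i = n - 1 then dist y y' else 0)) :=
          Finset.sum_le_sum key
      _ = (∑ i ∈ Finset.range n, dist (f (c i)) (c (i + 1)))
            + ∑ i ∈ Finset.range n, (if i = n - 1 then dist y y' else 0) := by
          rw [Finset.sum_add_distrib]
      _ = (∑ i ∈ Finset.range n, dist (f (c i)) (c (i + 1))) + dist y y' := by
          rw [Finset.sum_ite_eq' (Finset.range n) (n - 1) (fun _ => dist y y'),
            if_pos (Finset.mem_range.mpr (by omega))]
      _ < ε + δ := add_lt_add hsum hd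

variable (f) in
/-- The strong chain relation. -/
def SCRel (x y : X) : Prop := ∀ ε : ℝ, 0 < ε → HasChain f ε x y

lemma screl_step (x : X) : SCRel f x (f x) := fun _ hε => hasChain_step hε x

lemma screl_trans {x y z : X} (h₁ : SCRel f x y) (h₂ : SCRel f y z) : SCRel f x z := by
  intro ε hε
  have := hasChain_trans (h₁ (ε / 2) (by linarith)) (h₂ (ε / 2) (by linarith))
  simpa using this

lemma isClosed_screl (x : X) : IsClosed {y | SCRel f x y} := by
  rw [← closure_eq_iff_isClosed]
  refine Set.Subset.antisymm ?_ subset_closure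
  intro y hy ε hε
  rw [Metric.mem_closure_iff] at hy
  obtain ⟨y', hy', hdy⟩ := hy (ε / 2) (by linarith)
  have := hasChain_endpoint (hy' (ε / 2) (by linarith)) (by rwa [dist_comm] : dist y' y < ε / 2)
  simpa using this

end Aux

theorem exists_strong_chain_recurrent_point
    {X : Type*} [MetricSpace X] [CompactSpace X] [Nonempty X] (f : X → X) :
    ∃ x : X, ∀ ε : ℝ, 0 < ε → ∃ (n : ℕ) (c : ℕ → X), IsStrongChain f ε x x n c := by
  -- Consider the family of "strongly reachable" sets S x = {y | SCRel f x y}.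
  set S : X → Set X := fun x => {y | SCRel f x y} with hS
  have hSne : ∀ x, (S x).Nonempty := fun x => ⟨f x, screl_step x⟩
  have hScl : ∀ x, IsClosed (S x) := fun x => isClosed_screl x
  have hStrans : ∀ x y, y ∈ S x → S y ⊆ S x := fun x y hxy z hyz => screl_trans hxy hyz
  -- Zorn's lemma on the family {S x : x ∈ X} ordered by reverse inclusion.
  have key : ∀ c ⊆ Set.range S, IsChain (· ⊆ ·) c → c.Nonempty →
      ∃ lb ∈ Set.range S, ∀ s ∈ c, lb ⊆ s := by
    -- every nonempty chain has a lower bound, by compactness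
    intro c hcS hchain hcne
    haveI : Nonempty c := hcne.to_subtype
    have hdir : Directed (· ⊇ ·) (fun s : c => (s : Set X)) := by
      intro a b
      rcases hchain.total a.2 b.2 with h | h
      · exact ⟨a, le_refl _, h⟩
      · exact ⟨b, h, le_refl _⟩
    have hne : ∀ s : c, (s : Set X).Nonempty := by
      rintro ⟨s, hs⟩; obtain ⟨x, rfl⟩ := hcS hs; exact hSne x
    have hcl : ∀ s : c, IsClosed (s : Set X) := by
      rintro ⟨s, hs⟩; obtain ⟨x, rfl⟩ := hcS hs; exact hScl x
    obtain ⟨z, hz⟩ := IsCompact.nonempty_iInter_of_directed_nonempty_isCompact_isClosed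
      (fun s : c => (s : Set X)) hdir hne (fun s => (hcl s).isCompact) hcl
    refine ⟨S z, ⟨z, rfl⟩, fun s hs => ?_⟩
    obtain ⟨x, rfl⟩ := hcS hs
    have hzx : z ∈ S x := Set.mem_iInter.mp hz ⟨S x, hs⟩
    exact hStrans _ _ hzx
  obtain ⟨m, hmx, hmS, hmin⟩ := zorn_superset_nonempty (Set.range S) key
    (S (Classical.arbitrary X)) ⟨Classical.arbitrary X, rfl⟩
  obtain ⟨x₀, rfl⟩ := hmS
  -- `f x₀ ∈ S x₀`, and by minimality `S (f x₀) = S x₀`, so `f x₀ ∈ S (f x₀)`.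
  have h1 : f x₀ ∈ S x₀ := screl_step x₀
  have h2 : S (f x₀) ⊆ S x₀ := hStrans _ _ h1
  have h3 : S x₀ ⊆ S (f x₀) := hmin ⟨f x₀, rfl⟩ h2
  have h4 : SCRel f (f x₀) (f x₀) := h3 h1
  exact ⟨f x₀, fun ε hε => h4 ε hε⟩
end

section
/- Let X be a nonempty compact metrizable topological space and let f : X → X be an arbitrary function. Then the generalized recurrent set GR(f) is nonempty: there exists a point x ∈ X such that for EVERY metric d on X compatible with the topology of X (i.e., every function d : X × X → ℝ satisfying the metric axioms whose induced metric topology equals the given topology), x is strongly chain-recurrent for f with respect to d. -/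
/-- `c 0, c 1, …, c n` is a strong `(ε,d)`-chain for `f` from `x` to `y`, where the
"metric" `d : X → X → ℝ` is given explicitly as a function. -/
def IsStrongChainWith {X : Type*} (f : X → X) (d : X → X → ℝ) (ε : ℝ) (x y : X)
    (n : ℕ) (c : ℕ → X) : Prop :=
  1 ≤ n ∧ c 0 = x ∧ c n = y ∧
    ∑ i ∈ Finset.range n, d (f (c i)) (c (i + 1)) < ε

/-- There is a minimal nonempty closed forward-invariant set. -/
theorem exists_minimal_invariant {X : Type*} [TopologicalSpace X] [CompactSpace X]
    [Nonempty X] (f : X → X) :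
    ∃ M : Set X, M.Nonempty ∧ IsClosed M ∧ (∀ y ∈ M, f y ∈ M) ∧
      ∀ S : Set X, S.Nonempty → IsClosed S → (∀ y ∈ S, f y ∈ S) → S ⊆ M → S = M := by
  set 𝒮 : Set (Set X) := {S | S.Nonempty ∧ IsClosed S ∧ ∀ y ∈ S, f y ∈ S} with h𝒮
  have hX : (Set.univ : Set X) ∈ 𝒮 := ⟨Set.univ_nonempty, isClosed_univ, fun y _ => trivial⟩
  have hchains : ∀ c ⊆ 𝒮, IsChain (· ⊆ ·) c → c.Nonempty → ∃ lb ∈ 𝒮, ∀ s ∈ c, lb ⊆ s := by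
    rintro c hc𝒮 hchain ⟨S₀, hS₀⟩
    refine ⟨⋂ s ∈ c, s, ⟨?_, ?_, ?_⟩, fun s hs => Set.biInter_subset_of_mem hs⟩
    · have : Nonempty c := ⟨⟨S₀, hS₀⟩⟩
      have h := IsCompact.nonempty_iInter_of_directed_nonempty_isCompact_isClosed
        (fun s : c => (s : Set X)) ?_ (fun s => (hc𝒮 s.2).1)
        (fun s => (hc𝒮 s.2).2.1.isCompact) (fun s => (hc𝒮 s.2).2.1)
      · rwa [Set.biInter_eq_iInter]
      · rintro ⟨s, hs⟩ ⟨u, hu⟩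
        rcases hchain.total hs hu with h | h
        · exact ⟨⟨s, hs⟩, le_refl _, h⟩
        · exact ⟨⟨u, hu⟩, h, le_refl _⟩
    · exact isClosed_biInter fun s hs => (hc𝒮 hs).2.1
    · intro y hy
      simp only [Set.mem_iInter] at hy ⊢
      exact fun s hs => (hc𝒮 hs).2.2 y (hy s hs)
  obtain ⟨M, -, hM⟩ := zorn_superset_nonempty 𝒮 hchains Set.univ hX
  refine ⟨M, hM.prop.1, hM.prop.2.1, hM.prop.2.2, fun S hS1 hS2 hS3 hSM => ?_⟩
  exact hM.eq_of_le ⟨hS1, hS2, hS3⟩ hSM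

/-- Metric version of the key step. -/
theorem key_metric {X : Type*} [MetricSpace X] [CompactSpace X] (f : X → X) (M : Set X)
    (hMne : M.Nonempty) (hMcl : IsClosed M) (hMinv : ∀ y ∈ M, f y ∈ M)
    (hmin : ∀ S : Set X, S.Nonempty → IsClosed S → (∀ y ∈ S, f y ∈ S) → S ⊆ M → S = M)
    (x : X) (hx : x ∈ M) (ε : ℝ) (hε : 0 < ε) :
    ∃ (n : ℕ) (c : ℕ → X), IsStrongChainWith f (fun a b => dist a b) ε x x n c := by
  set Z : Set X := {y | y ∈ M ∧ ∀ δ : ℝ, 0 < δ →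
      ∃ (n : ℕ) (c : ℕ → X), IsStrongChainWith f (fun a b => dist a b) δ x y n c} with hZ
  -- f x ∈ Z
  have hfx : f x ∈ Z := by
    refine ⟨hMinv x hx, fun δ hδ => ⟨1, fun i => if i = 0 then x else f x, le_refl _, rfl, rfl, ?_⟩⟩
    simpa using hδ
  -- invariance
  have hZinv : ∀ y ∈ Z, f y ∈ Z := by
    rintro y ⟨hyM, hy⟩
    refine ⟨hMinv y hyM, fun δ hδ => ?_⟩
    obtain ⟨n, c, hn1, hc0, hcn, hsum⟩ := hy δ hδ
    refine ⟨n + 1, Function.update c (n + 1) (f y),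
      le_trans hn1 (Nat.le_succ n), ?_, Function.update_self _ _ _, ?_⟩
    · rw [Function.update_of_ne (by omega)]; exact hc0
    · rw [Finset.sum_range_succ]
      have h1 : ∀ i ∈ Finset.range n,
          dist (f (Function.update c (n+1) (f y) i)) (Function.update c (n+1) (f y) (i+1))
            = dist (f (c i)) (c (i+1)) := by
        intro i hi
        rw [Finset.mem_range] at hi
        rw [Function.update_of_ne (by omega), Function.update_of_ne (by omega)]
      rw [Finset.sum_congr rfl h1, Function.update_self,
        Function.update_of_ne (by omega), hcn]
      simpa using hsum
  -- closedness
  have hZcl : IsClosed Z := by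
    rw [← isSeqClosed_iff_isClosed]
    intro u y hu huy
    have hyM : y ∈ M := hMcl.isSeqClosed (fun k => (hu k).1) huy
    refine ⟨hyM, fun δ hδ => ?_⟩
    obtain ⟨N, hN⟩ := Metric.tendsto_atTop.mp huy (δ/2) (by linarith)
    have hk := hN N (le_refl N)
    set k := N with hkdef
    obtain ⟨n, c, hn1, hc0, hcn, hsum⟩ := (hu k).2 (δ/2) (by linarith)
    refine ⟨n, Function.update c n y, hn1, ?_, Function.update_self _ _ _, ?_⟩
    · rw [Function.update_of_ne (by omega)]; exact hc0
    · obtain ⟨p, rfl⟩ : ∃ p, n = p + 1 := ⟨n - 1, by omega⟩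
      rw [Finset.sum_range_succ]
      have h1 : ∀ i ∈ Finset.range p,
          dist (f (Function.update c (p+1) y i)) (Function.update c (p+1) y (i+1))
            = dist (f (c i)) (c (i+1)) := by
        intro i hi
        rw [Finset.mem_range] at hi
        rw [Function.update_of_ne (by omega), Function.update_of_ne (by omega)]
      rw [Finset.sum_congr rfl h1, Function.update_self, Function.update_of_ne (by omega)]
      have h2 : dist (f (c p)) y ≤ dist (f (c p)) (c (p+1)) + dist (c (p+1)) y :=
        dist_triangle _ _ _
      rw [Finset.sum_range_succ] at hsum
      have h3 : dist (c (p+1)) y < δ/2 := by rw [hcn]; exact hk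
      calc ∑ i ∈ Finset.range p, dist (f (c i)) (c (i+1)) + dist (f (c p)) y
          ≤ (∑ i ∈ Finset.range p, dist (f (c i)) (c (i+1)) + dist (f (c p)) (c (p+1)))
            + dist (c (p+1)) y := by linarith
        _ < δ/2 + δ/2 := by linarith
        _ = δ := by ring
  have hZM : Z = M := hmin Z ⟨f x, hfx⟩ hZcl hZinv (fun y hy => hy.1)
  exact (hZM ▸ hx : x ∈ Z).2 ε hε

/-- The generalized recurrent set of an arbitrary self-map of a nonempty compact
metrizable space is nonempty: some point is strongly chain-recurrent with respect to
every metric compatible with the topology. -/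
theorem generalized_recurrent_set_nonempty
    {X : Type*} [t : TopologicalSpace X] [CompactSpace X] [Nonempty X]
    [TopologicalSpace.MetrizableSpace X] (f : X → X) :
    ∃ x : X, ∀ m : MetricSpace X,
      m.toUniformSpace.toTopologicalSpace = t →
      ∀ ε : ℝ, 0 < ε →
        ∃ (n : ℕ) (c : ℕ → X),
          IsStrongChainWith f (fun a b => m.dist a b) ε x x n c := by
  obtain ⟨M, hMne, hMcl, hMinv, hmin⟩ := exists_minimal_invariant f
  obtain ⟨x, hx⟩ := hMne
  refine ⟨x, fun m hm ε hε => ?_⟩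
  subst hm
  exact @key_metric X m (by assumption) f M ⟨x, hx⟩ hMcl hMinv hmin x hx ε hε
end

section
/- Let X be a nonempty compact metric space with metric d and let f : X → X be an arbitrary function (no continuity is assumed). Then X has a nonempty invariant, internally SC_d-transitive subset: there exists a nonempty S ⊆ X with f(S) ⊆ S such that for all x,y ∈ S and every ε > 0 there is a strong (ε,d)-chain from x to y all of whose points lie in S. -/
theorem exists_invariant_internally_strong_chain_transitive_subset
    {X : Type*} [MetricSpace X] [CompactSpace X] [Nonempty X] (f : X → X) :
    ∃ S : Set X, S.Nonempty ∧ Set.MapsTo f S S ∧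
      ∀ x ∈ S, ∀ y ∈ S, ∀ ε : ℝ, 0 < ε →
        ∃ (n : ℕ) (c : ℕ → X), IsStrongChain f ε x y n c ∧ ∀ i ≤ n, c i ∈ S := by
  classical
  -- family of nonempty closed invariant sets
  set F : Set (Set X) := {S | S.Nonempty ∧ IsClosed S ∧ Set.MapsTo f S S} with hF
  have hXF : (Set.univ : Set X) ∈ F :=
    ⟨Set.univ_nonempty, isClosed_univ, fun x _ => Set.mem_univ _⟩
  -- Zorn: minimal element of F
  obtain ⟨S, -, hSF, hSmin⟩ : ∃ m, m ⊆ Set.univ ∧ Minimal (· ∈ F) m := by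
    apply zorn_superset_nonempty F ?_ _ hXF
    intro c hcF hchain hcne
    refine ⟨⋂₀ c, ⟨?_, ?_, ?_⟩, fun s hs => Set.sInter_subset_of_mem hs⟩
    · have : Nonempty c := hcne.to_subtype
      refine IsCompact.nonempty_sInter_of_directed_nonempty_isCompact_isClosed
        (fun a ha b hb => ?_) (fun U hU => (hcF hU).1)
        (fun U hU => (hcF hU).2.1.isCompact) (fun U hU => (hcF hU).2.1)
      rcases eq_or_ne a b with rfl | hab
      · exact ⟨a, ha, subset_rfl, subset_rfl⟩
      · rcases hchain ha hb hab with h | h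
        · exact ⟨a, ha, subset_rfl, h⟩
        · exact ⟨b, hb, h, subset_rfl⟩
    · exact isClosed_sInter fun U hU => (hcF hU).2.1
    · intro x hx U hU
      exact (hcF hU).2.2 (hx U hU)
  obtain ⟨hSne, hScl, hSinv⟩ := hSF
  refine ⟨S, hSne, hSinv, ?_⟩
  intro x hx
  -- internal reachability set from x
  set I : Set X := {z | z ∈ S ∧ ∀ ε : ℝ, 0 < ε →
      ∃ (n : ℕ) (c : ℕ → X), IsStrongChain f ε x z n c ∧ ∀ i ≤ n, c i ∈ S} with hI
  have hIS : I ⊆ S := fun z hz => hz.1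
  -- I is invariant
  have step : Set.MapsTo f I I := by
    rintro z ⟨hzS, hzch⟩
    refine ⟨hSinv hzS, fun ε hε => ?_⟩
    obtain ⟨n, c, ⟨hn1, hc0, hcn, hsum⟩, hmem⟩ := hzch ε hε
    refine ⟨n + 1, fun i => if i = n + 1 then f z else c i,
      ⟨by omega, ?_, by simp, ?_⟩, ?_⟩
    · simp only [if_neg (show (0 : ℕ) ≠ n + 1 by omega)]
      exact hc0
    · have h1 : ∀ i ∈ Finset.range n,
          dist (f (if i = n + 1 then f z else c i)) (if i + 1 = n + 1 then f z else c (i + 1))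
          = dist (f (c i)) (c (i + 1)) := by
        intro i hi
        rw [Finset.mem_range] at hi
        rw [if_neg (by omega), if_neg (by omega)]
      have key : ∑ i ∈ Finset.range (n + 1),
          dist (f (if i = n + 1 then f z else c i)) (if i + 1 = n + 1 then f z else c (i + 1))
          < ε := by
        rw [Finset.sum_range_succ, Finset.sum_congr rfl h1,
          if_neg (show n ≠ n + 1 by omega), if_pos rfl, hcn]
        simpa using hsum
      simpa using key
    · intro i hi
      by_cases h : i = n + 1
      · simpa [h] using hSinv hzS
      · have hin : i ≤ n := by omega
        simpa [h] using hmem i hin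
  -- I is nonempty
  have hfx : f x ∈ I := by
    refine ⟨hSinv hx, fun ε hε => ?_⟩
    refine ⟨1, fun i => if i = 0 then x else f x, ⟨le_refl 1, by simp, by simp, ?_⟩, ?_⟩
    · simpa using hε
    · intro i hi
      interval_cases i
      · simpa using hx
      · simpa using hSinv hx
  -- I is closed
  have hIcl : IsClosed I := by
    rw [← closure_subset_iff_isClosed]
    intro z hz
    have hzS : z ∈ S := hScl.closure_subset_iff.mpr hIS hz
    refine ⟨hzS, fun ε hε => ?_⟩
    obtain ⟨w, hwI, hwz⟩ := Metric.mem_closure_iff.mp hz (ε / 2) (by linarith)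
    obtain ⟨n, c, ⟨hn1, hc0, hcn, hsum⟩, hmem⟩ := hwI.2 (ε / 2) (by linarith)
    obtain ⟨m, rfl⟩ : ∃ m, n = m + 1 := ⟨n - 1, by omega⟩
    refine ⟨m + 1, fun i => if i = m + 1 then z else c i, ⟨hn1, ?_, by simp, ?_⟩, ?_⟩
    · simp only [if_neg (show (0 : ℕ) ≠ m + 1 by omega)]
      exact hc0
    · have h1 : ∀ i ∈ Finset.range m,
          dist (f (if i = m + 1 then z else c i)) (if i + 1 = m + 1 then z else c (i + 1))
          = dist (f (c i)) (c (i + 1)) := by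
        intro i hi
        rw [Finset.mem_range] at hi
        rw [if_neg (by omega), if_neg (by omega)]
      have key : ∑ i ∈ Finset.range (m + 1),
          dist (f (if i = m + 1 then z else c i)) (if i + 1 = m + 1 then z else c (i + 1))
          < ε := by
        rw [Finset.sum_range_succ, Finset.sum_congr rfl h1,
          if_neg (show m ≠ m + 1 by omega), if_pos rfl]
        rw [Finset.sum_range_succ] at hsum
        have hwz' : dist w z < ε / 2 := by rw [dist_comm]; exact hwz
        have htri : dist (f (c m)) z ≤ dist (f (c m)) (c (m + 1)) + dist w z := by
          calc dist (f (c m)) z ≤ dist (f (c m)) w + dist w z := dist_triangle _ _ _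
          _ = dist (f (c m)) (c (m + 1)) + dist w z := by rw [hcn]
        linarith
      simpa using key
    · intro i hi
      by_cases h : i = m + 1
      · simpa [h] using hzS
      · simpa [h] using hmem i hi
  -- by minimality, I = S
  have hIF : I ∈ F := ⟨⟨f x, hfx⟩, hIcl, step⟩
  have hIeq : I = S := le_antisymm hIS (hSmin hIF hIS)
  intro y hy ε hε
  have hyI : y ∈ I := hIeq.symm ▸ hy
  exact hyI.2 ε hε
end

section
/- Let X be a nonempty compact metric space with metric d and let f : X → X be an arbitrary function (no continuity is assumed). Then (X,f) has an SC_d-transitive subsystem: there exists a nonempty, topologically closed subset S ⊆ X with f(S) ⊆ S that is internally SC_d-transitive, i.e., for all x,y ∈ S and every ε > 0 there is a strong (ε,d)-chain from x to y all of whose points lie in S. -/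
theorem exists_strong_chain_transitive_subsystem
    {X : Type*} [MetricSpace X] [CompactSpace X] [Nonempty X] (f : X → X) :
    ∃ S : Set X, S.Nonempty ∧ IsClosed S ∧ Set.MapsTo f S S ∧
      ∀ x ∈ S, ∀ y ∈ S, ∀ ε : ℝ, 0 < ε →
        ∃ (n : ℕ) (c : ℕ → X), IsStrongChain f ε x y n c ∧ ∀ i ≤ n, c i ∈ S := by
  classical
  -- The collection of nonempty closed invariant subsets.
  set 𝒮 : Set (Set X) := {S | S.Nonempty ∧ IsClosed S ∧ Set.MapsTo f S S} with h𝒮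
  -- Zorn's lemma: there is a minimal element of 𝒮.
  have hzorn : ∀ c ⊆ 𝒮, IsChain (· ⊆ ·) c → c.Nonempty → ∃ lb ∈ 𝒮, ∀ s ∈ c, lb ⊆ s := by
    -- chains have lower bounds: the intersection
    intro c hc hchain hcne
    obtain ⟨s₀, hs₀⟩ := hcne
    haveI : Nonempty c := ⟨⟨s₀, hs₀⟩⟩
    refine ⟨⋂ s : c, (s : Set X), ⟨?_, ?_, ?_⟩, fun s hs => Set.iInter_subset_of_subset ⟨s, hs⟩ le_rfl⟩
    · apply IsCompact.nonempty_iInter_of_directed_nonempty_isCompact_isClosed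
      · rintro ⟨a, ha⟩ ⟨b, hb⟩
        rcases hchain.total ha hb with h | h
        · exact ⟨⟨a, ha⟩, le_rfl, h⟩
        · exact ⟨⟨b, hb⟩, h, le_rfl⟩
      · exact fun s => (hc s.2).1
      · exact fun s => (hc s.2).2.1.isCompact
      · exact fun s => (hc s.2).2.1
    · exact isClosed_iInter fun s => (hc s.2).2.1
    · intro z hz
      simp only [Set.mem_iInter] at hz ⊢
      exact fun s => (hc s.2).2.2 (hz s)
  obtain ⟨M, -, hM⟩ := zorn_superset_nonempty 𝒮 hzorn Set.univ
    ⟨Set.univ_nonempty, isClosed_univ, Set.mapsTo_univ _ _⟩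
  obtain ⟨⟨hMne, hMcl, hMinv⟩, hMmin⟩ := hM
  refine ⟨M, hMne, hMcl, hMinv, ?_⟩
  intro x hx y hy ε hε
  -- the set of points reachable from x within M at cost approaching ε/2
  set C : Set X := {y | y ∈ M ∧ ∀ δ : ℝ, 0 < δ →
    ∃ (n : ℕ) (c : ℕ → X), IsStrongChain f (ε / 2 + δ) x y n c ∧ ∀ i ≤ n, c i ∈ M} with hC
  have hCsub : C ⊆ M := fun z hz => hz.1
  -- C is nonempty : f x ∈ C
  have hCne : C.Nonempty := by
    refine ⟨f x, hMinv hx, fun δ hδ => ⟨1, fun i => if i = 0 then x else f x, ⟨le_rfl, by simp, by simp, ?_⟩, ?_⟩⟩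
    · simp only [Finset.sum_range_one]
      simpa using by positivity
    · intro i hi
      by_cases h : i = 0
      · simpa [h] using hx
      · simpa [h] using hMinv hx
  -- C is invariant
  have hCinv : Set.MapsTo f C C := by
    rintro z ⟨hzM, hz⟩
    refine ⟨hMinv hzM, fun δ hδ => ?_⟩
    obtain ⟨n, c, ⟨hn1, hc0, hcn, hsum⟩, hmem⟩ := hz δ hδ
    refine ⟨n + 1, fun i => if i = n + 1 then f z else c i, ⟨by omega, ?_, by simp, ?_⟩, ?_⟩
    · simp only [if_neg (show (0 : ℕ) ≠ n + 1 by omega)]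
      exact hc0
    · beta_reduce
      rw [Finset.sum_range_succ]
      have h1 : ∀ i ∈ Finset.range n,
          dist (f (if i = n + 1 then f z else c i)) (if i + 1 = n + 1 then f z else c (i + 1))
          = dist (f (c i)) (c (i + 1)) := by
        intro i hi
        rw [Finset.mem_range] at hi
        rw [if_neg (by omega), if_neg (by omega)]
      rw [Finset.sum_congr rfl h1, if_neg (show ¬ n = n + 1 by omega), if_pos rfl, hcn,
        dist_self, add_zero]
      exact hsum
    · intro i hi
      by_cases h : i = n + 1
      · simp only [h, if_pos rfl]
        exact hMinv hzM
      · simp only [if_neg h]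
        exact hmem i (by omega)
  -- C is closed
  have hCcl : IsClosed C := by
    rw [← isSeqClosed_iff_isClosed]
    intro u z hu hz
    have hzM : z ∈ M := hMcl.isSeqClosed (fun k => (hu k).1) hz
    refine ⟨hzM, fun δ hδ => ?_⟩
    obtain ⟨N, hN⟩ := Metric.tendsto_atTop.mp hz (δ / 2) (by positivity)
    have hk : dist (u N) z < δ / 2 := hN N le_rfl
    obtain ⟨n, c, ⟨hn1, hc0, hcn, hsum⟩, hmem⟩ := (hu N).2 (δ / 2) (by positivity)
    obtain ⟨m, rfl⟩ : ∃ m, n = m + 1 := ⟨n - 1, by omega⟩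
    refine ⟨m + 1, fun i => if i = m + 1 then z else c i, ⟨by omega, ?_, by simp, ?_⟩, ?_⟩
    · simp only [if_neg (show (0 : ℕ) ≠ m + 1 by omega)]
      exact hc0
    · beta_reduce
      rw [Finset.sum_range_succ]
      have h1 : ∀ i ∈ Finset.range m,
          dist (f (if i = m + 1 then z else c i)) (if i + 1 = m + 1 then z else c (i + 1))
          = dist (f (c i)) (c (i + 1)) := by
        intro i hi
        rw [Finset.mem_range] at hi
        rw [if_neg (by omega), if_neg (by omega)]
      rw [Finset.sum_congr rfl h1, if_neg (show ¬ m = m + 1 by omega), if_pos rfl]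
      have h2 : dist (f (c m)) z ≤ dist (f (c m)) (c (m + 1)) + dist (c (m + 1)) z :=
        dist_triangle _ _ _
      have h3 : dist (c (m + 1)) z < δ / 2 := by rw [hcn]; exact hk
      rw [Finset.sum_range_succ] at hsum
      linarith
    · intro i hi
      by_cases h : i = m + 1
      · simp only [h, if_pos rfl]
        exact hzM
      · simp only [if_neg h]
        exact hmem i (by omega)
  -- by minimality, C = M
  have hCM : C = M :=
    Set.Subset.antisymm hCsub (hMmin ⟨hCne, hCcl, hCinv⟩ hCsub)
  have hyC : y ∈ C := hCM ▸ hy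
  obtain ⟨n, c, ⟨hn1, hc0, hcn, hsum⟩, hmem⟩ := hyC.2 (ε / 2) (by positivity)
  exact ⟨n, c, ⟨hn1, hc0, hcn, by linarith⟩, hmem⟩
end

section
/- Let (X,d) be a metric space, f : X → X an arbitrary function, and let M ⊆ X be a nonempty set with f(M) ⊆ M that is internally SC_d-transitive. Let y be a point of the topological closure of M. Then for every x ∈ M and every ε > 0 there exists a strong (ε,d)-chain from x to y all of whose points belong to M ∪ {y}; in particular x SC_d y for every x ∈ M. -/
theorem strong_chain_to_closure_point
    {X : Type*} [MetricSpace X] (f : X → X) (M : Set X) (hM : M.Nonempty)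
    (hinv : Set.MapsTo f M M)
    (htrans : ∀ x ∈ M, ∀ y ∈ M, ∀ ε : ℝ, 0 < ε →
      ∃ (n : ℕ) (c : ℕ → X), IsStrongChain f ε x y n c ∧ ∀ i ≤ n, c i ∈ M)
    (y : X) (hy : y ∈ closure M) :
    ∀ x ∈ M,
      (∀ ε : ℝ, 0 < ε → ∃ (n : ℕ) (c : ℕ → X),
        IsStrongChain f ε x y n c ∧ ∀ i ≤ n, c i ∈ M ∪ {y}) ∧
      StrongChainRel f x y := by
  intro x hx
  have main : ∀ ε : ℝ, 0 < ε → ∃ (n : ℕ) (c : ℕ → X),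
      IsStrongChain f ε x y n c ∧ ∀ i ≤ n, c i ∈ M ∪ {y} := by
    intro ε hε
    obtain ⟨m, hmM, hmy⟩ := Metric.mem_closure_iff.mp hy (ε / 2) (by linarith)
    obtain ⟨n, c, ⟨hn1, hc0, hcn, hsum⟩, hmem⟩ := htrans x hx m hmM (ε / 2) (by linarith)
    obtain ⟨k, rfl⟩ : ∃ k, n = k + 1 := ⟨n - 1, by omega⟩
    refine ⟨k + 1, fun i => if i = k + 1 then y else c i, ⟨Nat.le_add_left 1 k, ?_, by simp, ?_⟩, ?_⟩
    · simpa using hc0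
    · have hsplit : ∑ i ∈ Finset.range (k + 1),
          dist (f (if i = k + 1 then y else c i)) (if i + 1 = k + 1 then y else c (i + 1))
          = (∑ i ∈ Finset.range k, dist (f (c i)) (c (i + 1))) + dist (f (c k)) y := by
        rw [Finset.sum_range_succ]
        congr 1
        · apply Finset.sum_congr rfl
          intro i hi
          have := Finset.mem_range.mp hi
          rw [if_neg (by omega), if_neg (by omega)]
        · rw [if_neg (by omega), if_pos rfl]
      rw [hsplit]
      have htri : dist (f (c k)) y ≤ dist (f (c k)) (c (k + 1)) + dist m y := by
        calc dist (f (c k)) y ≤ dist (f (c k)) m + dist m y := dist_triangle _ _ _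
        _ = dist (f (c k)) (c (k + 1)) + dist m y := by rw [hcn]
      have hold : (∑ i ∈ Finset.range k, dist (f (c i)) (c (i + 1)))
          + dist (f (c k)) (c (k + 1)) < ε / 2 := by
        rw [← Finset.sum_range_succ]; exact hsum
      rw [dist_comm] at hmy
      linarith
    · intro i hi
      by_cases h : i = k + 1
      · simp [h]
      · simp only [if_neg h]; exact Or.inl (hmem i (by omega))
  exact ⟨main, fun ε hε => by
    obtain ⟨n, c, h, _⟩ := main ε hε; exact ⟨n, c, h⟩⟩
end

section
/- Let X be a nonempty compact metric space with metric d and let f : X → X be an arbitrary function with no periodic points, i.e., f^[k](x) ≠ x for every x ∈ X and every integer k ≥ 1. Then there exists an infinite, topologically closed subset S ⊆ X with f(S) ⊆ S that is internally SC_d-transitive. -/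
theorem exists_infinite_strong_chain_transitive_subsystem_of_no_periodic_points
    {X : Type*} [MetricSpace X] [CompactSpace X] [Nonempty X] (f : X → X)
    (hper : ∀ x : X, ∀ k : ℕ, 1 ≤ k → f^[k] x ≠ x) :
    ∃ S : Set X, S.Infinite ∧ IsClosed S ∧ Set.MapsTo f S S ∧
      ∀ x ∈ S, ∀ y ∈ S, ∀ ε : ℝ, 0 < ε →
        ∃ (n : ℕ) (c : ℕ → X), IsStrongChain f ε x y n c ∧ ∀ i ≤ n, c i ∈ S := by
  classical
  set 𝒞 : Set (Set X) := {S | S.Nonempty ∧ IsClosed S ∧ Set.MapsTo f S S} with h𝒞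
  have hXmem : (Set.univ : Set X) ∈ 𝒞 :=
    ⟨Set.univ_nonempty, isClosed_univ, Set.mapsTo_univ f _⟩
  -- Zorn: there is a minimal nonempty closed invariant set M
  obtain ⟨M, -, hMmem, hMmin⟩ :
      ∃ M, M ⊆ Set.univ ∧ Minimal (· ∈ 𝒞) M := by
    refine zorn_superset_nonempty 𝒞 ?_ Set.univ hXmem
    intro c hc hchain hcne
    refine ⟨⋂₀ c, ⟨?_, ?_, ?_⟩, fun s hs => Set.sInter_subset_of_mem hs⟩
    · haveI : Nonempty c := hcne.to_subtype
      refine IsCompact.nonempty_sInter_of_directed_nonempty_isCompact_isClosed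
        ?_ (fun U hU => (hc hU).1) (fun U hU => (hc hU).2.1.isCompact)
        (fun U hU => (hc hU).2.1)
      intro a ha b hb
      rcases eq_or_ne a b with rfl | hne
      · exact ⟨a, ha, subset_rfl, subset_rfl⟩
      · rcases hchain ha hb hne with h | h
        · exact ⟨a, ha, subset_rfl, h⟩
        · exact ⟨b, hb, h, subset_rfl⟩
    · exact isClosed_sInter fun U hU => (hc hU).2.1
    · intro z hz
      rw [Set.mem_sInter] at hz ⊢
      intro U hU
      exact (hc hU).2.2 (hz U hU)
  obtain ⟨hMne, hMcl, hMinv⟩ := hMmem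
  refine ⟨M, ?_, hMcl, hMinv, ?_⟩
  · -- M is infinite, else there would be a periodic point
    rw [Set.infinite_coe_iff.symm]
    by_contra hfin
    rw [not_infinite_iff_finite] at hfin
    obtain ⟨x, hx⟩ := hMne
    have horb : ∀ n : ℕ, f^[n] x ∈ M := fun n => (hMinv.iterate n) hx
    obtain ⟨i, j, hij, heq⟩ :=
      Finite.exists_ne_map_eq_of_infinite (fun n : ℕ => (⟨f^[n] x, horb n⟩ : M))
    have heq' : f^[i] x = f^[j] x := congrArg Subtype.val heq
    rcases lt_or_gt_of_ne hij with h | h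
    · refine hper (f^[i] x) (j - i) (by omega) ?_
      rw [← Function.iterate_add_apply, Nat.sub_add_cancel h.le, ← heq']
    · refine hper (f^[j] x) (i - j) (by omega) ?_
      rw [← Function.iterate_add_apply, Nat.sub_add_cancel h.le, heq']
  · -- internal strong chain transitivity
    intro x hx y hy ε hε
    set W : Set X := {z | z ∈ M ∧ ∀ δ : ℝ, 0 < δ →
        ∃ (n : ℕ) (c : ℕ → X), IsStrongChain f δ x z n c ∧ ∀ i ≤ n, c i ∈ M} with hWdef
    -- f x ∈ W
    have hfx : f x ∈ W := by
      refine ⟨hMinv hx, fun δ hδ => ?_⟩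
      refine ⟨1, fun i => if i = 0 then x else f x,
        ⟨le_refl 1, by simp, by simp, by simp [hδ]⟩, ?_⟩
      intro i hi
      interval_cases i
      · simpa using hx
      · simpa using hMinv hx
    -- W is invariant
    have hWinv : Set.MapsTo f W W := by
      rintro z ⟨hzM, hz⟩
      refine ⟨hMinv hzM, fun δ hδ => ?_⟩
      obtain ⟨n, c, ⟨hn, hc0, hcn, hsum⟩, hmem⟩ := hz δ hδ
      set c' : ℕ → X := fun i => if i = n + 1 then f z else c i with hc'
      have hlow : ∀ i ≤ n, c' i = c i := fun i hi => by
        simp only [hc']; rw [if_neg (by omega)]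
      refine ⟨n + 1, c', ⟨by omega, ?_, by simp [hc'], ?_⟩, ?_⟩
      · rw [hlow 0 (by omega)]; exact hc0
      · rw [Finset.sum_range_succ]
        have h1 : ∀ i ∈ Finset.range n,
            dist (f (c' i)) (c' (i + 1)) = dist (f (c i)) (c (i + 1)) := by
          intro i hi
          rw [Finset.mem_range] at hi
          rw [hlow i (by omega), hlow (i + 1) (by omega)]
        rw [Finset.sum_congr rfl h1, hlow n le_rfl, hcn]
        simpa [hc'] using hsum
      · intro i hi
        by_cases hin : i = n + 1
        · simp only [hc']; rw [if_pos hin]; exact hMinv hzM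
        · rw [hlow i (by omega)]; exact hmem i (by omega)
    -- W is closed
    have hWcl : IsClosed W := by
      apply isClosed_of_closure_subset
      intro z hzcl
      have hzM : z ∈ M := by
        have hsub : closure W ⊆ closure M := closure_mono fun a ha => ha.1
        exact hMcl.closure_subset (hsub hzcl)
      refine ⟨hzM, fun δ hδ => ?_⟩
      rw [Metric.mem_closure_iff] at hzcl
      obtain ⟨w, hwW, hwz⟩ := hzcl (δ / 2) (by linarith)
      obtain ⟨n, c, ⟨hn, hc0, hcn, hsum⟩, hmem⟩ := hwW.2 (δ / 2) (by linarith)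
      set c' : ℕ → X := fun i => if i = n then z else c i with hc'
      have hlow : ∀ i < n, c' i = c i := fun i hi => by
        simp only [hc']; rw [if_neg (by omega)]
      refine ⟨n, c', ⟨hn, ?_, by simp [hc'], ?_⟩, ?_⟩
      · rw [hlow 0 (by omega)]; exact hc0
      · calc ∑ i ∈ Finset.range n, dist (f (c' i)) (c' (i + 1))
            ≤ ∑ i ∈ Finset.range n,
              (dist (f (c i)) (c (i + 1)) + if i = n - 1 then dist w z else 0) := by
              refine Finset.sum_le_sum fun i hi => ?_
              rw [Finset.mem_range] at hi
              rw [hlow i hi]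
              by_cases hin : i + 1 = n
              · simp only [hc']
                rw [if_pos hin, if_pos (by omega)]
                calc dist (f (c i)) z ≤ dist (f (c i)) (c (i + 1)) + dist (c (i + 1)) z :=
                      dist_triangle _ _ _
                  _ = dist (f (c i)) (c (i + 1)) + dist w z := by rw [hin, hcn]
              · rw [hlow (i + 1) (by omega), if_neg (by omega), add_zero]
          _ = (∑ i ∈ Finset.range n, dist (f (c i)) (c (i + 1)))
              + ∑ i ∈ Finset.range n, (if i = n - 1 then dist w z else 0) := by
              rw [Finset.sum_add_distrib]
          _ = (∑ i ∈ Finset.range n, dist (f (c i)) (c (i + 1))) + dist w z := by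
              rw [Finset.sum_ite_eq' (Finset.range n) (n - 1) (fun _ => dist w z),
                if_pos (Finset.mem_range.mpr (by omega))]
          _ < δ / 2 + δ / 2 := by
              rw [dist_comm z w] at hwz
              exact add_lt_add hsum hwz
          _ = δ := by ring
      · intro i hi
        by_cases hin : i = n
        · simp only [hc']; rw [if_pos hin]; exact hzM
        · rw [hlow i (by omega)]; exact hmem i hi
    -- by minimality, M ⊆ W
    have hWM : M ⊆ W := hMmin ⟨⟨f x, hfx⟩, hWcl, hWinv⟩ (fun z hz => hz.1)
    exact (hWM hy).2 ε hε
end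

section
/- Let (X,d) be a metric space, f : X → X an arbitrary function, and S ⊆ X a set with f(S) ⊆ S that is internally SC_d-transitive. Suppose x ∈ S is an isolated point of S, i.e., there exists r > 0 such that S ∩ B(x,r) = {x}, where B(x,r) is the open ball of radius r. Then x has an exact preimage inside S: there exists y ∈ S with f(y) = x. -/
theorem isolated_point_has_preimage_in_transitive_set
    {X : Type*} [MetricSpace X] (f : X → X) (S : Set X)
    (hinv : Set.MapsTo f S S)
    (htrans : ∀ x ∈ S, ∀ y ∈ S, ∀ ε : ℝ, 0 < ε →
      ∃ (n : ℕ) (c : ℕ → X), IsStrongChain f ε x y n c ∧ ∀ i ≤ n, c i ∈ S)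
    (x : X) (hx : x ∈ S) (r : ℝ) (hr : 0 < r)
    (hiso : S ∩ Metric.ball x r = {x}) :
    ∃ y ∈ S, f y = x := by
  obtain ⟨n, c, ⟨hn, hc0, hcn, hsum⟩, hmem⟩ := htrans x hx x hx r hr
  have hlast : dist (f (c (n - 1))) (c n) < r := by
    have h1 : dist (f (c (n - 1))) (c (n - 1 + 1)) ≤
        ∑ i ∈ Finset.range n, dist (f (c i)) (c (i + 1)) :=
      Finset.single_le_sum (f := fun i => dist (f (c i)) (c (i+1))) (fun i _ => dist_nonneg)
        (Finset.mem_range.mpr (Nat.sub_lt hn one_pos))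
    rw [Nat.sub_add_cancel hn] at h1
    linarith
  have hy : c (n - 1) ∈ S := hmem _ (Nat.sub_le n 1)
  have hfy : f (c (n - 1)) ∈ S ∩ Metric.ball x r :=
    ⟨hinv hy, Metric.mem_ball.mpr (by rwa [hcn] at hlast)⟩
  rw [hiso] at hfy
  exact ⟨c (n - 1), hy, hfy⟩
end

section
/- Let E be a complex Hilbert space and let w, v ∈ E be unit vectors such that the inner product ⟪v, w⟫ equals a real number c with 0 ≤ c < 1. Define the continuous linear operator K : E → E by K(u) = (arccos c / √(1 − c²)) · ( ⟪w, u⟫ · v − ⟪v, u⟫ · w ). Then: (i) K is skew-adjoint, i.e., K* = −K; (ii) the operator norm of K equals arccos c; (iii) exp(K) w = v, where exp is the exponential in the Banach algebra of continuous linear operators on E. -/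
open scoped ComplexConjugate

theorem rotation_generator_properties
    {E : Type*} [NormedAddCommGroup E] [InnerProductSpace ℂ E] [CompleteSpace E]
    (w v : E) (hw : ‖w‖ = 1) (hv : ‖v‖ = 1)
    (c : ℝ) (hc0 : 0 ≤ c) (hc1 : c < 1)
    (hvw : (inner ℂ v w : ℂ) = (c : ℂ)) :
    let K : E →L[ℂ] E :=
      ((Real.arccos c / Real.sqrt (1 - c ^ 2) : ℝ) : ℂ) •
        ((innerSL ℂ w).smulRight v - (innerSL ℂ v).smulRight w)
    ContinuousLinearMap.adjoint K = -K ∧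
      ‖K‖ = Real.arccos c ∧
      (NormedSpace.exp K) w = v := by
  intro K
  have hKdef : K = ((Real.arccos c / Real.sqrt (1 - c ^ 2) : ℝ) : ℂ) •
        ((innerSL ℂ w).smulRight v - (innerSL ℂ v).smulRight w) := rfl
  set δ := Real.arccos c with hδdef
  set s := Real.sqrt (1 - c ^ 2) with hsdef
  have h1c : (0:ℝ) < 1 - c ^ 2 := by nlinarith
  have hspos : 0 < s := Real.sqrt_pos.mpr h1c
  have hssq : s ^ 2 = 1 - c ^ 2 := Real.sq_sqrt h1c.le
  have hsne : (s:ℂ) ≠ 0 := by exact_mod_cast hspos.ne'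
  have hδpos : 0 < δ := Real.arccos_pos.mpr hc1
  have hcosδ : Real.cos δ = c := Real.cos_arccos (by linarith) hc1.le
  have hsinδ : Real.sin δ = s := Real.sin_arccos c
  have hww : (inner ℂ w w : ℂ) = 1 := by
    rw [inner_self_eq_norm_sq_to_K, hw]; norm_num
  have hvv : (inner ℂ v v : ℂ) = 1 := by
    rw [inner_self_eq_norm_sq_to_K, hv]; norm_num
  have hwv : (inner ℂ w v : ℂ) = (c:ℂ) := by
    rw [← inner_conj_symm, hvw, Complex.conj_ofReal]
  have hKapp : ∀ x : E, K x
      = ((δ/s : ℝ):ℂ) • ((inner ℂ w x : ℂ) • v - (inner ℂ v x : ℂ) • w) := by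
    intro x; rw [hKdef]; simp
  -- the second basis vector
  set u : E := ((s:ℂ))⁻¹ • (v - (c:ℂ) • w) with hudef
  have hs2C : ((s:ℂ))^2 = 1 - (c:ℂ)^2 := by exact_mod_cast hssq
  have hwu : (inner ℂ w u : ℂ) = 0 := by
    rw [hudef, inner_smul_right, inner_sub_right, inner_smul_right, hwv, hww]; ring
  have hvu : (inner ℂ v u : ℂ) = (s:ℂ) := by
    rw [hudef, inner_smul_right, inner_sub_right, inner_smul_right, hvv, hvw]
    field_simp
    linear_combination -hs2C
  have huw : (inner ℂ u w : ℂ) = 0 := by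
    rw [← inner_conj_symm, hwu]; simp
  have huu : (inner ℂ u u : ℂ) = 1 := by
    simp only [hudef, inner_smul_left, inner_smul_right, inner_sub_left, inner_sub_right,
      hww, hvv, hwv, hvw, map_inv₀, Complex.conj_ofReal]
    field_simp
    linear_combination -hs2C
  have hnu : ‖u‖ = 1 := by
    have h0 := inner_self_eq_norm_sq_to_K (𝕜 := ℂ) u
    rw [huu] at h0
    have h2 : (‖u‖:ℂ)^2 = 1 := h0.symm
    have h3 : ‖u‖^2 = 1 := by exact_mod_cast h2
    nlinarith [norm_nonneg u]
  have hKw : K w = (δ:ℂ) • u := by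
    rw [hKapp, hww, hvw, hudef, one_smul, smul_smul]
    congr 1
    push_cast
    field_simp
  have hKu : K u = (-(δ:ℂ)) • w := by
    rw [hKapp, hwu, hvu, zero_smul, zero_sub, smul_neg, smul_smul, ← neg_smul]
    congr 1
    push_cast
    field_simp
  have hadj : ContinuousLinearMap.adjoint K = -K := by
    symm
    rw [ContinuousLinearMap.eq_adjoint_iff]
    intro x y
    simp only [ContinuousLinearMap.neg_apply, hKapp, inner_neg_left, inner_smul_left,
      inner_smul_right, inner_sub_left, inner_sub_right, inner_conj_symm, Complex.conj_ofReal,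
      map_sub, map_mul]
    ring
  have hon : Orthonormal ℂ ![w, u] := by
    rw [orthonormal_iff_ite]
    intro i j
    fin_cases i <;> fin_cases j <;> simp [hww, huu, hwu, huw, hw, hnu]
  have hbessel : ∀ x : E, ‖(inner ℂ w x : ℂ)‖^2 + ‖(inner ℂ u x : ℂ)‖^2 ≤ ‖x‖^2 := by
    intro x
    have h := hon.sum_inner_products_le (s := Finset.univ) x
    simpa [Fin.sum_univ_two] using h
  have hveq : v = (c:ℂ) • w + (s:ℂ) • u := by
    rw [hudef, smul_inv_smul₀ hsne]
    abel
  have hKx : ∀ x : E, K x = (δ:ℂ) • ((inner ℂ w x : ℂ) • u - (inner ℂ u x : ℂ) • w) := by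
    intro x
    have hvx : (inner ℂ v x : ℂ) = (c:ℂ) * (inner ℂ w x : ℂ) + (s:ℂ) * (inner ℂ u x : ℂ) := by
      rw [hveq, inner_add_left, inner_smul_left, inner_smul_left, Complex.conj_ofReal,
        Complex.conj_ofReal]
    rw [hKapp, hvx, hveq]
    match_scalars <;> (push_cast; field_simp; try ring)
  have hKle : ∀ x : E, ‖K x‖ ≤ δ * ‖x‖ := by
    intro x
    rw [hKx, norm_smul]
    have hnd : ‖((δ:ℝ):ℂ)‖ = δ := by
      rw [Complex.norm_real, Real.norm_eq_abs, abs_of_pos hδpos]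
    rw [hnd]
    have h0 : ‖(inner ℂ w x:ℂ) • u - (inner ℂ u x:ℂ) • w‖^2
        = ‖(inner ℂ w x:ℂ)‖^2 + ‖(inner ℂ u x:ℂ)‖^2 := by
      rw [@norm_sub_sq ℂ, inner_smul_left, inner_smul_right, huw]
      simp [norm_smul, hnu, hw]
    have h1 := hbessel x
    have h2 : ‖(inner ℂ w x:ℂ) • u - (inner ℂ u x:ℂ) • w‖ ≤ ‖x‖ := by
      nlinarith [norm_nonneg ((inner ℂ w x:ℂ) • u - (inner ℂ u x:ℂ) • w), norm_nonneg x]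
    exact mul_le_mul_of_nonneg_left h2 hδpos.le
  have hKnorm : ‖K‖ = δ := by
    refine le_antisymm (ContinuousLinearMap.opNorm_le_bound K hδpos.le hKle) ?_
    have h2 : ‖K w‖ = δ := by
      rw [hKw, norm_smul, hnu, mul_one, Complex.norm_real, Real.norm_eq_abs,
        abs_of_pos hδpos]
    calc δ = ‖K w‖ := h2.symm
      _ ≤ ‖K‖ * ‖w‖ := K.le_opNorm w
      _ = ‖K‖ := by rw [hw, mul_one]
  have hpow : ∀ k : ℕ, (K ^ (2*k)) w = ((-((δ:ℂ)^2))^k) • w ∧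
      (K ^ (2*k+1)) w = (((-((δ:ℂ)^2))^k) * (δ:ℂ)) • u := by
    intro k
    induction k with
    | zero => simp [hKw]
    | succ n ih =>
      obtain ⟨ihe, iho⟩ := ih
      have he1 : (K ^ (2*(n+1))) w = ((-((δ:ℂ)^2))^(n+1)) • w := by
        have h2 : 2*(n+1) = (2*n+1)+1 := by ring
        rw [h2, pow_succ', ContinuousLinearMap.mul_apply, iho, map_smul, hKu, smul_smul]
        congr 1
        ring
      refine ⟨he1, ?_⟩
      rw [pow_succ', ContinuousLinearMap.mul_apply, he1, map_smul, hKw, smul_smul]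
  have hevenSum : HasSum (fun k : ℕ => ((Nat.factorial (2*k) : ℂ))⁻¹ • (K ^ (2*k)) w)
      ((Complex.cos (δ:ℂ)) • w) := by
    have h := (Complex.hasSum_cos (δ:ℂ)).smul_const w
    convert h using 1
    funext k
    rw [(hpow k).1, smul_smul]
    congr 1
    rw [neg_pow, ← pow_mul]
    ring
  have hoddSum : HasSum (fun k : ℕ => ((Nat.factorial (2*k+1) : ℂ))⁻¹ • (K ^ (2*k+1)) w)
      ((Complex.sin (δ:ℂ)) • u) := by
    have h := (Complex.hasSum_sin (δ:ℂ)).smul_const u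
    convert h using 1
    funext k
    rw [(hpow k).2, smul_smul]
    congr 1
    rw [neg_pow, ← pow_mul]
    ring
  have hsum : HasSum (fun n : ℕ => ((Nat.factorial n : ℂ))⁻¹ • (K ^ n) w)
      ((Complex.cos (δ:ℂ)) • w + (Complex.sin (δ:ℂ)) • u) :=
    HasSum.even_add_odd hevenSum hoddSum
  have hexp : HasSum (fun n : ℕ => ((Nat.factorial n : ℂ))⁻¹ • (K ^ n) w)
      ((NormedSpace.exp K) w) := by
    have h := NormedSpace.exp_series_hasSum_exp' (𝕂 := ℂ) K
    have h2 := (ContinuousLinearMap.apply ℂ E w).hasSum h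
    simpa using h2
  refine ⟨hadj, hKnorm, ?_⟩
  rw [hexp.unique hsum,
    show Complex.cos (δ:ℂ) = (c:ℂ) by rw [← Complex.ofReal_cos, hcosδ],
    show Complex.sin (δ:ℂ) = (s:ℂ) by rw [← Complex.ofReal_sin, hsinδ],
    hudef, smul_smul, mul_inv_cancel₀ hsne, one_smul]
  abel
end

section
/- Let E be a complex inner product space and let u, v, w ∈ E be unit vectors. Then arccos |⟪u, w⟫| ≤ arccos |⟪u, v⟫| + arccos |⟪v, w⟫|. (Together with symmetry and arccos |⟪u,u⟫| = 0, this shows that d_FS(u,v) = arccos |⟪u,v⟫| is a pseudometric on unit vectors, descending to the Fubini–Study metric on the projective space of E.) -/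
open Real

section Helpers

variable {E : Type*} [NormedAddCommGroup E] [InnerProductSpace ℂ E]

local notation "⟪" x ", " y "⟫" => @inner ℂ _ _ x y

lemma fs_inner_proj (u v w : E) (hv : ‖v‖ = 1) :
    ⟪u - ⟪v, u⟫ • v, w - ⟪v, w⟫ • v⟫ = ⟪u, w⟫ - ⟪u, v⟫ * ⟪v, w⟫ := by
  have hvv : ⟪v, v⟫ = 1 := by
    rw [inner_self_eq_norm_sq_to_K, hv]; norm_num
  simp [inner_sub_left, inner_sub_right, inner_smul_left, inner_smul_right, hvv,
    inner_conj_symm, hv]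
  ring

lemma fs_norm_proj (u v : E) (hu : ‖u‖ = 1) (hv : ‖v‖ = 1) :
    ‖u - ⟪v, u⟫ • v‖ = Real.sqrt (1 - (‖⟪u, v⟫‖)^2) := by
  have huu : ⟪u, u⟫ = 1 := by
    rw [inner_self_eq_norm_sq_to_K, hu]; norm_num
  have h := fs_inner_proj u v u hv
  rw [huu] at h
  have hc : ⟪u, v⟫ * ⟪v, u⟫ = ((‖⟪u, v⟫‖ : ℝ) : ℂ)^2 := by
    rw [← inner_conj_symm u v, mul_comm, Complex.mul_conj, Complex.normSq_eq_norm_sq,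
      Complex.norm_conj]
    push_cast
    ring
  have h2 : ‖u - ⟪v, u⟫ • v‖^2 = 1 - (‖⟪u, v⟫‖)^2 := by
    have h3 := @inner_self_eq_norm_sq ℂ _ _ _ _ (u - ⟪v, u⟫ • v)
    rw [h, hc] at h3
    rw [← h3]
    simp [← Complex.ofReal_pow]
  rw [← Real.sqrt_sq (norm_nonneg _), h2]

lemma arccos_anti {x y : ℝ} (hxy : x ≤ y) : Real.arccos y ≤ Real.arccos x := by
  unfold Real.arccos
  have := Real.monotone_arcsin hxy
  linarith

lemma fs_key (u v w : E) (hu : ‖u‖ = 1) (hv : ‖v‖ = 1) (hw : ‖w‖ = 1) :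
    ‖⟪u, v⟫‖ * ‖⟪v, w⟫‖ -
      Real.sqrt (1 - (‖⟪u, v⟫‖)^2) * Real.sqrt (1 - (‖⟪v, w⟫‖)^2) ≤
      ‖⟪u, w⟫‖ := by
  have h1 : ‖⟪u, w⟫ - ⟪u, v⟫ * ⟪v, w⟫‖ ≤
      Real.sqrt (1 - (‖⟪u, v⟫‖)^2) * Real.sqrt (1 - (‖⟪v, w⟫‖)^2) := by
    have habs : ‖⟪v, w⟫‖ = ‖⟪w, v⟫‖ := by
      rw [← inner_conj_symm w v, Complex.norm_conj]
    rw [habs, ← fs_inner_proj u v w hv, ← fs_norm_proj u v hu hv, ← fs_norm_proj w v hw hv]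
    exact norm_inner_le_norm (𝕜 := ℂ) (u - ⟪v, u⟫ • v) (w - ⟪v, w⟫ • v)
  have h2 : ‖⟪u, v⟫ * ⟪v, w⟫‖ ≤
      ‖⟪u, w⟫‖ + ‖⟪u, w⟫ - ⟪u, v⟫ * ⟪v, w⟫‖ := by
    calc ‖⟪u, v⟫ * ⟪v, w⟫‖
        = ‖⟪u, w⟫ - (⟪u, w⟫ - ⟪u, v⟫ * ⟪v, w⟫)‖ := by ring_nf
      _ ≤ _ := by
          simpa using
            norm_sub_le (⟪u, w⟫) (⟪u, w⟫ - ⟪u, v⟫ * ⟪v, w⟫)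
  rw [norm_mul] at h2
  linarith

end Helpers

theorem fubini_study_triangle
    {E : Type*} [NormedAddCommGroup E] [InnerProductSpace ℂ E]
    (u v w : E) (hu : ‖u‖ = 1) (hv : ‖v‖ = 1) (hw : ‖w‖ = 1) :
    Real.arccos (‖(inner ℂ u w : ℂ)‖) ≤
      Real.arccos (‖(inner ℂ u v : ℂ)‖) +
        Real.arccos (‖(inner ℂ v w : ℂ)‖) := by
  set a := ‖(inner ℂ u v : ℂ)‖ with ha
  set b := ‖(inner ℂ v w : ℂ)‖ with hb
  set c := ‖(inner ℂ u w : ℂ)‖ with hc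
  have ha0 : 0 ≤ a := norm_nonneg _
  have hb0 : 0 ≤ b := norm_nonneg _
  have hc0 : 0 ≤ c := norm_nonneg _
  have ha1 : a ≤ 1 := by
    have := norm_inner_le_norm (𝕜 := ℂ) u v
    simpa [hu, hv] using this
  have hb1 : b ≤ 1 := by
    have := norm_inner_le_norm (𝕜 := ℂ) v w
    simpa [hv, hw] using this
  have hcos : Real.cos (Real.arccos a + Real.arccos b) =
      a * b - Real.sqrt (1 - a^2) * Real.sqrt (1 - b^2) := by
    rw [Real.cos_add, Real.cos_arccos (by linarith) ha1, Real.cos_arccos (by linarith) hb1,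
      Real.sin_arccos, Real.sin_arccos]
  have hkey := fs_key u v w hu hv hw
  calc Real.arccos c ≤ Real.arccos (Real.cos (Real.arccos a + Real.arccos b)) := by
        apply arccos_anti
        rw [hcos]; exact hkey
    _ = Real.arccos a + Real.arccos b := by
        apply Real.arccos_cos
        · have := Real.arccos_nonneg a
          have := Real.arccos_nonneg b
          linarith
        · have h1 : Real.arccos a ≤ π / 2 := (Real.arccos_le_pi_div_two).2 ha0
          have h2 : Real.arccos b ≤ π / 2 := (Real.arccos_le_pi_div_two).2 hb0
          linarith
end
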